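/- Let k ≥ 1 and let ℓ ∉ {2, 3} be prime. If 3 ∣ k, then for every m ≥ 1, if applying the modified mod-3 Hecke operator T'_ℓ a total of m times to the mod-3 reduction of D_2^{k/3} yields 0 in (ℤ/3ℤ)[[q]], then applying T'_ℓ a total of m times to the mod-3 reduction of D_2^k also yields 0. If 2 ∣ k, then for every m ≥ 1, if applying T'_ℓ a total of m times to the mod-3 reduction of Δ^{k/2} yields 0, then applying T'_ℓ a total of m times to the mod-3 reduction of D_2^k also yields 0. That is, N_ℓ(D_2^k, 3) ≤ N_ℓ(D_2^{k/3}, 3) when 3 ∣ k, and N_ℓ(D_2^k, 3) ≤ N_ℓ(Δ^{k/2}, 3) when 2 ∣ k. -/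

import Mathlib

noncomputable def Delta : PowerSeries ℤ :=
  PowerSeries.mk fun n => PowerSeries.coeff (R := ℤ) n
    (PowerSeries.X * ∏ m ∈ Finset.range n, (1 - PowerSeries.X ^ (m + 1)) ^ 24)

noncomputable def D2 : PowerSeries ℤ :=
  PowerSeries.mk fun n => PowerSeries.coeff (R := ℤ) n
    (PowerSeries.X * ∏ m ∈ Finset.range n, (1 - PowerSeries.X ^ (2 * (m + 1))) ^ 12)

noncomputable def heckeT (p ℓ : ℕ) (f : PowerSeries (ZMod p)) : PowerSeries (ZMod p) :=
  PowerSeries.mk fun n =>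
    PowerSeries.coeff (R := ZMod p) (ℓ * n) f +
      (ℓ : ZMod p)⁻¹ * (if ℓ ∣ n then PowerSeries.coeff (R := ZMod p) (n / ℓ) f else 0)

noncomputable def heckeT' (p ℓ : ℕ) (f : PowerSeries (ZMod p)) : PowerSeries (ZMod p) :=
  if ℓ % p = 1 then heckeT p ℓ f - 2 * f else heckeT p ℓ f

open PowerSeries Finset

/-! ### The V operator (substitution `q ↦ q^r`) -/

noncomputable def Vop {R : Type*} [CommRing R] (r : ℕ) (f : PowerSeries R) : PowerSeries R :=
  PowerSeries.mk fun n => if r ∣ n then PowerSeries.coeff (R := R) (n / r) f else 0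

@[simp] lemma coeff_Vop {R : Type*} [CommRing R] (r n : ℕ) (f : PowerSeries R) :
    PowerSeries.coeff (R := R) n (Vop r f) = if r ∣ n then PowerSeries.coeff (R := R) (n / r) f else 0 := by
  simp [Vop]

@[simp] lemma Vop_zero {R : Type*} [CommRing R] (r : ℕ) : Vop r (0 : PowerSeries R) = 0 := by
  ext n; simp

lemma Vop_add {R : Type*} [CommRing R] (r : ℕ) (f g : PowerSeries R) :
    Vop r (f + g) = Vop r f + Vop r g := by
  ext n; by_cases h : r ∣ n <;> simp [h]

lemma Vop_sub {R : Type*} [CommRing R] (r : ℕ) (f g : PowerSeries R) :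
    Vop r (f - g) = Vop r f - Vop r g := by
  ext n; by_cases h : r ∣ n <;> simp [h]

lemma Vop_two_mul {R : Type*} [CommRing R] (r : ℕ) (f : PowerSeries R) :
    Vop r (2 * f) = 2 * Vop r f := by
  ext n; by_cases h : r ∣ n <;> simp [h, two_mul]

lemma Vop_one {R : Type*} [CommRing R] (r : ℕ) (hr : r ≠ 0) :
    Vop r (1 : PowerSeries R) = 1 := by
  ext n
  rw [coeff_Vop]
  by_cases h : r ∣ n
  · rw [if_pos h]
    rcases Nat.eq_zero_or_pos n with rfl | hn
    · simp
    · rw [PowerSeries.coeff_one, PowerSeries.coeff_one, if_neg hn.ne',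
        if_neg (Nat.div_pos (Nat.le_of_dvd hn h) (Nat.pos_of_ne_zero hr)).ne']
  · rw [if_neg h, PowerSeries.coeff_one, if_neg]
    rintro rfl; exact h (dvd_zero r)

lemma Vop_mul {R : Type*} [CommRing R] (r : ℕ) (hr : r ≠ 0) (f g : PowerSeries R) :
    Vop r (f * g) = Vop r f * Vop r g := by
  have hrpos := Nat.pos_of_ne_zero hr
  ext n
  rw [PowerSeries.coeff_mul, coeff_Vop]
  by_cases h : r ∣ n
  · obtain ⟨c, rfl⟩ := h
    rw [if_pos (dvd_mul_right r c), Nat.mul_div_cancel_left _ hrpos,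
      PowerSeries.coeff_mul]
    have himg : ((antidiagonal c).image (fun q : ℕ × ℕ => (r * q.1, r * q.2)))
        ⊆ antidiagonal (r * c) := by
      intro p hp
      simp only [Finset.mem_image, HasAntidiagonal.mem_antidiagonal] at hp ⊢
      obtain ⟨q, hq, rfl⟩ := hp
      rw [← Nat.mul_add, hq]
    have hzero : ∀ p ∈ antidiagonal (r * c),
        p ∉ (antidiagonal c).image (fun q : ℕ × ℕ => (r * q.1, r * q.2)) →
        PowerSeries.coeff (R := R) p.1 (Vop r f) * PowerSeries.coeff (R := R) p.2 (Vop r g) = 0 := by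
      intro p hp hnp
      rw [HasAntidiagonal.mem_antidiagonal] at hp
      by_cases h1 : r ∣ p.1
      · by_cases h2 : r ∣ p.2
        · exfalso
          apply hnp
          obtain ⟨a, ha⟩ := h1; obtain ⟨b, hb⟩ := h2
          refine Finset.mem_image.2 ⟨(a, b), ?_, by rw [← ha, ← hb]⟩
          rw [HasAntidiagonal.mem_antidiagonal]
          have : r * (a + b) = r * c := by rw [Nat.mul_add, ← ha, ← hb, hp]
          exact Nat.eq_of_mul_eq_mul_left hrpos this
        · rw [coeff_Vop r p.2, if_neg h2, mul_zero]
      · rw [coeff_Vop r p.1, if_neg h1, zero_mul]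
    have hinj : ∀ x ∈ antidiagonal c, ∀ y ∈ antidiagonal c,
        (fun q : ℕ × ℕ => (r * q.1, r * q.2)) x = (fun q : ℕ × ℕ => (r * q.1, r * q.2)) y →
        x = y := by
      intro x _ y _ hxy
      have h1 : r * x.1 = r * y.1 := congrArg Prod.fst hxy
      have h2 : r * x.2 = r * y.2 := congrArg Prod.snd hxy
      exact Prod.ext (Nat.eq_of_mul_eq_mul_left hrpos h1)
        (Nat.eq_of_mul_eq_mul_left hrpos h2)
    rw [← Finset.sum_subset himg hzero, Finset.sum_image hinj]
    apply Finset.sum_congr rfl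
    intro q _
    simp [Nat.mul_div_cancel_left _ hrpos]
  · rw [if_neg h]
    symm
    apply Finset.sum_eq_zero
    intro p hp
    rw [HasAntidiagonal.mem_antidiagonal] at hp
    by_cases h1 : r ∣ p.1
    · by_cases h2 : r ∣ p.2
      · exact absurd (hp ▸ Nat.dvd_add h1 h2) h
      · rw [coeff_Vop r p.2, if_neg h2, mul_zero]
    · rw [coeff_Vop r p.1, if_neg h1, zero_mul]

lemma Vop_pow {R : Type*} [CommRing R] (r : ℕ) (hr : r ≠ 0) (f : PowerSeries R) (j : ℕ) :
    Vop r (f ^ j) = (Vop r f) ^ j := by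
  induction j with
  | zero => simpa using Vop_one r hr
  | succ j ih => rw [pow_succ, Vop_mul r hr, ih, pow_succ]

lemma Vop_map {R S : Type*} [CommRing R] [CommRing S] (g : R →+* S) (r : ℕ)
    (f : PowerSeries R) :
    PowerSeries.map g (Vop r f) = Vop r (PowerSeries.map g f) := by
  ext n
  rw [PowerSeries.coeff_map, coeff_Vop, coeff_Vop, apply_ite g, map_zero,
    PowerSeries.coeff_map]

lemma Vop_X_pow {R : Type*} [CommRing R] (r : ℕ) (hr : r ≠ 0) (j : ℕ) :
    Vop r ((PowerSeries.X : PowerSeries R) ^ j) = PowerSeries.X ^ (r * j) := by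
  have hrpos := Nat.pos_of_ne_zero hr
  ext n
  rw [coeff_Vop, PowerSeries.coeff_X_pow, PowerSeries.coeff_X_pow]
  by_cases h : r ∣ n
  · rw [if_pos h]
    obtain ⟨c, rfl⟩ := h
    rw [Nat.mul_div_cancel_left _ hrpos]
    by_cases hc : c = j
    · rw [if_pos hc, if_pos (by rw [hc])]
    · rw [if_neg hc, if_neg (fun hh => hc (Nat.eq_of_mul_eq_mul_left hrpos hh))]
  · rw [if_neg h, if_neg (fun hh : n = r * j => h (hh ▸ dvd_mul_right r j))]

/-! ### Frobenius: cubing is V₃ in characteristic 3 -/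

lemma cube_eq_Vop (f : PowerSeries (ZMod 3)) : f ^ 3 = Vop 3 f := by
  haveI : Fact (Nat.Prime 3) := ⟨by norm_num⟩
  ext n
  set P : Polynomial (ZMod 3) := PowerSeries.trunc (n + 1) f with hP
  have hdvd : (PowerSeries.X : PowerSeries (ZMod 3)) ^ (n + 1) ∣
      f - (P : PowerSeries (ZMod 3)) := by
    rw [PowerSeries.X_pow_dvd_iff]
    intro d hd
    rw [map_sub, PowerSeries.coeff_coe_trunc_of_lt hd, sub_self]
  have hdvd3 : (PowerSeries.X : PowerSeries (ZMod 3)) ^ (n + 1) ∣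
      f ^ 3 - (P : PowerSeries (ZMod 3)) ^ 3 :=
    dvd_trans hdvd (sub_dvd_pow_sub_pow _ _ 3)
  have h1 : PowerSeries.coeff (R := ZMod 3) n (f ^ 3) =
      PowerSeries.coeff (R := ZMod 3) n ((P : PowerSeries (ZMod 3)) ^ 3) := by
    have := (PowerSeries.X_pow_dvd_iff.mp hdvd3) n (Nat.lt_succ_self n)
    rwa [map_sub, sub_eq_zero] at this
  have h2 : P ^ 3 = Polynomial.expand (ZMod 3) 3 P := by
    have := Polynomial.map_frobenius_expand (p := 3) P
    rw [ZMod.frobenius_zmod, Polynomial.map_id] at this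
    exact this.symm
  rw [h1, ← Polynomial.coe_pow, Polynomial.coeff_coe, h2,
    Polynomial.coeff_expand (by norm_num : (0:ℕ) < 3), coeff_Vop]
  by_cases h : 3 ∣ n
  · rw [if_pos h, if_pos h, hP, PowerSeries.coeff_trunc,
      if_pos (lt_of_le_of_lt (Nat.div_le_self n 3) (Nat.lt_succ_self n))]
  · rw [if_neg h, if_neg h]

/-! ### Hecke operators commute with V -/

lemma heckeT_Vop (p r ℓ : ℕ) (hco : Nat.Coprime r ℓ)
    (f : PowerSeries (ZMod p)) :
    heckeT p ℓ (Vop r f) = Vop r (heckeT p ℓ f) := by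
  ext n
  simp only [heckeT, PowerSeries.coeff_mk, coeff_Vop]
  by_cases h : r ∣ n
  · rw [if_pos h, if_pos (h.mul_left ℓ), Nat.mul_div_assoc ℓ h]
    congr 1
    by_cases hln : ℓ ∣ n
    · have h1 : ℓ ∣ n / r := (Nat.dvd_div_iff_mul_dvd h).mpr
        (Nat.Coprime.mul_dvd_of_dvd_of_dvd hco h hln)
      have h2 : r ∣ n / ℓ := (Nat.dvd_div_iff_mul_dvd hln).mpr
        (by rw [mul_comm]; exact Nat.Coprime.mul_dvd_of_dvd_of_dvd hco h hln)
      rw [if_pos hln, if_pos h1, if_pos h2, Nat.div_div_eq_div_mul,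
        Nat.div_div_eq_div_mul, mul_comm ℓ r]
    · have h1 : ¬ ℓ ∣ n / r := fun hc => hln (dvd_trans hc (Nat.div_dvd_of_dvd h))
      rw [if_neg hln, if_neg h1]
  · rw [if_neg h, if_neg (fun hc => h (Nat.Coprime.dvd_of_dvd_mul_left hco hc))]
    by_cases hln : ℓ ∣ n
    · rw [if_pos hln, if_neg (fun hc => h (dvd_trans hc (Nat.div_dvd_of_dvd hln)))]
      simp
    · rw [if_neg hln]
      simp

lemma heckeT'_Vop (p r ℓ : ℕ) (hco : Nat.Coprime r ℓ)
    (f : PowerSeries (ZMod p)) :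
    heckeT' p ℓ (Vop r f) = Vop r (heckeT' p ℓ f) := by
  rw [heckeT', heckeT']
  by_cases h : ℓ % p = 1
  · rw [if_pos h, if_pos h, heckeT_Vop p r ℓ hco, Vop_sub, Vop_two_mul]
  · rw [if_neg h, if_neg h, heckeT_Vop p r ℓ hco]

lemma heckeT'_iter_Vop (p r ℓ : ℕ) (hco : Nat.Coprime r ℓ)
    (f : PowerSeries (ZMod p)) (m : ℕ) :
    (heckeT' p ℓ)^[m] (Vop r f) = Vop r ((heckeT' p ℓ)^[m] f) := by
  induction m generalizing f with
  | zero => rfl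
  | succ m ih =>
    rw [Function.iterate_succ_apply, Function.iterate_succ_apply,
      heckeT'_Vop p r ℓ hco, ih]

/-! ### Stability of coefficients of the truncated eta products -/

lemma coeff_stable {R : Type*} [CommRing R] (c : ℕ → ℕ) (hc : ∀ m, m + 1 ≤ c m)
    (e : ℕ) {n N : ℕ} (hn : n ≤ N) :
    PowerSeries.coeff (R := R) n (PowerSeries.X * ∏ m ∈ range N, (1 - PowerSeries.X ^ (c m)) ^ e) =
    PowerSeries.coeff (R := R) n (PowerSeries.X * ∏ m ∈ range n, (1 - PowerSeries.X ^ (c m)) ^ e) := by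
  induction N, hn using Nat.le_induction with
  | base => rfl
  | succ N hN ih =>
    rw [Finset.prod_range_succ, ← mul_assoc]
    set A : PowerSeries R := PowerSeries.X * ∏ m ∈ range N, (1 - PowerSeries.X ^ (c m)) ^ e
    have h1 : (PowerSeries.X : PowerSeries R) ^ (c N) ∣ (1 - PowerSeries.X ^ (c N)) ^ e - 1 := by
      have hs := sub_dvd_pow_sub_pow (1 - PowerSeries.X ^ (c N) : PowerSeries R) 1 e
      rw [one_pow] at hs
      have h2 : (1 - PowerSeries.X ^ (c N) : PowerSeries R) - 1 = -(PowerSeries.X ^ (c N)) := by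
        ring
      rw [h2] at hs
      exact dvd_trans (dvd_neg.mpr dvd_rfl) hs
    have hd : (PowerSeries.X : PowerSeries R) ^ (n + 1) ∣
        A * (1 - PowerSeries.X ^ (c N)) ^ e - A := by
      have heq : A * (1 - PowerSeries.X ^ (c N)) ^ e - A
          = A * ((1 - PowerSeries.X ^ (c N)) ^ e - 1) := by ring
      rw [heq]
      exact dvd_trans (pow_dvd_pow _ (le_trans (Nat.succ_le_succ hN) (hc N)))
        (Dvd.dvd.mul_left h1 A)
    have hcoeff := PowerSeries.X_pow_dvd_iff.mp hd n (Nat.lt_succ_self n)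
    rw [map_sub, sub_eq_zero] at hcoeff
    rw [hcoeff, ih]

lemma coeff_Delta (n N : ℕ) (h : n ≤ N) :
    PowerSeries.coeff (R := ℤ) n Delta =
    PowerSeries.coeff (R := ℤ) n
      (PowerSeries.X * ∏ m ∈ range N, (1 - PowerSeries.X ^ (m + 1)) ^ 24) := by
  rw [Delta, PowerSeries.coeff_mk,
    coeff_stable (fun m => m + 1) (fun m => le_refl _) 24 h]

lemma coeff_D2 (n N : ℕ) (h : n ≤ N) :
    PowerSeries.coeff (R := ℤ) n D2 =
    PowerSeries.coeff (R := ℤ) n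
      (PowerSeries.X * ∏ m ∈ range N, (1 - PowerSeries.X ^ (2 * (m + 1))) ^ 12) := by
  rw [D2, PowerSeries.coeff_mk,
    coeff_stable (fun m => 2 * (m + 1)) (fun m => by show m + 1 ≤ 2 * (m + 1); omega) 12 h]

/-! ### The identity `D2 ^ 2 = V₂ Δ` over ℤ -/

lemma Vop2_prod (n : ℕ) :
    Vop 2 (∏ m ∈ range n, (1 - PowerSeries.X ^ (m + 1) : PowerSeries ℤ) ^ 24)
      = ∏ m ∈ range n, (1 - PowerSeries.X ^ (2 * (m + 1)) : PowerSeries ℤ) ^ 24 := by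
  induction n with
  | zero => simpa using Vop_one 2 two_ne_zero
  | succ n ih =>
    rw [Finset.prod_range_succ, Finset.prod_range_succ, Vop_mul 2 two_ne_zero, ih,
      Vop_pow 2 two_ne_zero, Vop_sub, Vop_one 2 two_ne_zero, Vop_X_pow 2 two_ne_zero]

lemma D2_sq : D2 ^ 2 = Vop 2 Delta := by
  ext n
  have hL : PowerSeries.coeff (R := ℤ) n (D2 ^ 2) =
      PowerSeries.coeff (R := ℤ) n
        ((PowerSeries.X * ∏ m ∈ range n, (1 - PowerSeries.X ^ (2 * (m + 1))) ^ 12) ^ 2) := by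
    rw [pow_two, pow_two, PowerSeries.coeff_mul, PowerSeries.coeff_mul]
    apply Finset.sum_congr rfl
    intro p hp
    rw [HasAntidiagonal.mem_antidiagonal] at hp
    rw [coeff_D2 p.1 n (by omega), coeff_D2 p.2 n (by omega)]
  have hR : PowerSeries.coeff (R := ℤ) n (Vop 2 Delta) =
      PowerSeries.coeff (R := ℤ) n
        (Vop 2 (PowerSeries.X * ∏ m ∈ range n, (1 - PowerSeries.X ^ (m + 1)) ^ 24)) := by
    rw [coeff_Vop, coeff_Vop]
    by_cases h : 2 ∣ n
    · rw [if_pos h, if_pos h, coeff_Delta (n / 2) n (Nat.div_le_self n 2)]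
    · rw [if_neg h, if_neg h]
  rw [hL, hR, Vop_mul 2 two_ne_zero, Vop2_prod]
  have hX : Vop 2 (PowerSeries.X : PowerSeries ℤ) = PowerSeries.X ^ 2 := by
    have := Vop_X_pow (R := ℤ) 2 two_ne_zero 1
    rwa [pow_one, mul_one] at this
  rw [hX, mul_pow, Finset.prod_pow, Finset.prod_pow, ← pow_mul]

theorem stmt5 (k : ℕ) (hk : 1 ≤ k)
    (ℓ : ℕ) (hℓ : Nat.Prime ℓ) (h2 : ℓ ≠ 2) (h3 : ℓ ≠ 3) :
    (3 ∣ k → ∀ m : ℕ, 1 ≤ m →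
      (heckeT' 3 ℓ)^[m]
        (PowerSeries.map (Int.castRingHom (ZMod 3)) (D2 ^ (k / 3))) = 0 →
      (heckeT' 3 ℓ)^[m]
        (PowerSeries.map (Int.castRingHom (ZMod 3)) (D2 ^ k)) = 0) ∧
    (2 ∣ k → ∀ m : ℕ, 1 ≤ m →
      (heckeT' 3 ℓ)^[m]
        (PowerSeries.map (Int.castRingHom (ZMod 3)) (Delta ^ (k / 2))) = 0 →
      (heckeT' 3 ℓ)^[m]
        (PowerSeries.map (Int.castRingHom (ZMod 3)) (D2 ^ k)) = 0) := by
  constructor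
  · intro h3k m _ hzero
    have hco : Nat.Coprime 3 ℓ :=
      (Nat.coprime_primes (by norm_num) hℓ).mpr (fun h => h3 h.symm)
    have hD : PowerSeries.map (Int.castRingHom (ZMod 3)) (D2 ^ k)
        = Vop 3 (PowerSeries.map (Int.castRingHom (ZMod 3)) (D2 ^ (k / 3))) := by
      rw [← cube_eq_Vop, ← map_pow, ← pow_mul, Nat.div_mul_cancel h3k]
    rw [hD, heckeT'_iter_Vop 3 3 ℓ hco, hzero, Vop_zero]
  · intro h2k m _ hzero
    have hco : Nat.Coprime 2 ℓ :=
      (Nat.coprime_primes (by norm_num) hℓ).mpr (fun h => h2 h.symm)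
    have hD : PowerSeries.map (Int.castRingHom (ZMod 3)) (D2 ^ k)
        = Vop 2 (PowerSeries.map (Int.castRingHom (ZMod 3)) (Delta ^ (k / 2))) := by
      have hZ : D2 ^ k = Vop 2 (Delta ^ (k / 2)) := by
        rw [Vop_pow 2 two_ne_zero, ← D2_sq, ← pow_mul, Nat.mul_div_cancel' h2k]
      rw [hZ, Vop_map]
    rw [hD, heckeT'_iter_Vop 3 2 ℓ hco, hzero, Vop_zero]
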